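/- arXiv:1706.08989 — 7 statements merged into one kernel-verified Lean document; each statement's English description precedes it below -/
import Mathlib

section
/- For every integer n ≥ 2: (1/3)·(jQ^{(3)}_n − 4·jQ^{(3)}_{n−2}) equals 2 − i − j + 2k if n ≡ 0 (mod 3), equals −1 − i + 2j − k if n ≡ 1 (mod 3), and equals −1 + 2i − j − k if n ≡ 2 (mod 3). -/
open Quaternion

/-- Third order Jacobsthal numbers. -/
def J3 : ℕ → ℤ
  | 0 => 0
  | 1 => 1
  | 2 => 1
  | n + 3 => J3 (n + 2) + J3 (n + 1) + 2 * J3 n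

/-- Third order Jacobsthal-Lucas numbers. -/
def jL3 : ℕ → ℤ
  | 0 => 2
  | 1 => 1
  | 2 => 5
  | n + 3 => jL3 (n + 2) + jL3 (n + 1) + 2 * jL3 n

/-- The quaternion unit `i`. -/
noncomputable def qi : ℍ[ℝ] := ⟨0, 1, 0, 0⟩
/-- The quaternion unit `j`. -/
noncomputable def qj : ℍ[ℝ] := ⟨0, 0, 1, 0⟩
/-- The quaternion unit `k`. -/
noncomputable def qk : ℍ[ℝ] := ⟨0, 0, 0, 1⟩

/-- The `n`-th third order Jacobsthal quaternion. -/
noncomputable def JQ (n : ℕ) : ℍ[ℝ] :=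
  (J3 n : ℝ) + (J3 (n + 1) : ℝ) * qi + (J3 (n + 2) : ℝ) * qj + (J3 (n + 3) : ℝ) * qk

/-- The `n`-th third order Jacobsthal-Lucas quaternion. -/
noncomputable def jQ (n : ℕ) : ℍ[ℝ] :=
  (jL3 n : ℝ) + (jL3 (n + 1) : ℝ) * qi + (jL3 (n + 2) : ℝ) * qj + (jL3 (n + 3) : ℝ) * qk

lemma jL3_key : ∀ n : ℕ, jL3 (n + 2) - 4 * jL3 n = if n % 3 = 1 then 6 else -3 := by
  have H : ∀ n : ℕ,
      (jL3 (n + 2) - 4 * jL3 n = if n % 3 = 1 then 6 else -3) ∧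
      (jL3 (n + 3) - 4 * jL3 (n + 1) = if (n + 1) % 3 = 1 then 6 else -3) ∧
      (jL3 (n + 4) - 4 * jL3 (n + 2) = if (n + 2) % 3 = 1 then 6 else -3) := by
    intro n
    induction n with
    | zero => refine ⟨?_, ?_, ?_⟩ <;> simp [jL3] <;> decide
    | succ k ih =>
      obtain ⟨h1, h2, h3⟩ := ih
      refine ⟨h2, h3, ?_⟩
      show jL3 (k + 5) - 4 * jL3 (k + 3) = if (k + 1 + 2) % 3 = 1 then 6 else -3
      have e1 : jL3 (k + 5) = jL3 (k + 4) + jL3 (k + 3) + 2 * jL3 (k + 2) := rfl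
      have e2 : jL3 (k + 3) = jL3 (k + 2) + jL3 (k + 1) + 2 * jL3 k := rfl
      rw [e1, e2, show (k + 1 + 2) % 3 = k % 3 from by omega]
      simp only [show (k + 1) % 3 = (k % 3 + 1) % 3 from by omega,
        show (k + 2) % 3 = (k % 3 + 2) % 3 from by omega] at h2 h3
      rcases (show k % 3 = 0 ∨ k % 3 = 1 ∨ k % 3 = 2 by omega) with h | h | h <;>
        simp only [h] at h1 h2 h3 ⊢ <;> norm_num at h1 h2 h3 ⊢ <;> linarith
  exact fun n => (H n).1

@[simp] lemma qi_re : qi.re = 0 := rfl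
@[simp] lemma qi_imI : qi.imI = 1 := rfl
@[simp] lemma qi_imJ : qi.imJ = 0 := rfl
@[simp] lemma qi_imK : qi.imK = 0 := rfl
@[simp] lemma qj_re : qj.re = 0 := rfl
@[simp] lemma qj_imI : qj.imI = 0 := rfl
@[simp] lemma qj_imJ : qj.imJ = 1 := rfl
@[simp] lemma qj_imK : qj.imK = 0 := rfl
@[simp] lemma qk_re : qk.re = 0 := rfl
@[simp] lemma qk_imI : qk.imI = 0 := rfl
@[simp] lemma qk_imJ : qk.imJ = 0 := rfl
@[simp] lemma qk_imK : qk.imK = 1 := rfl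

lemma hq (a b c d a' b' c' d' : ℝ) (h0 : a = 3 * a') (h1 : b = 3 * b')
    (h2 : c = 3 * c') (h3 : d = 3 * d') (X T : ℍ[ℝ])
    (hX : X = (a : ℍ[ℝ]) + (b : ℝ) * qi + (c : ℝ) * qj + (d : ℝ) * qk)
    (hT : T = (a' : ℍ[ℝ]) + (b' : ℝ) * qi + (c' : ℝ) * qj + (d' : ℝ) * qk) :
    (1 / 3 : ℍ[ℝ]) * X = T := by
  have h3' : (3 : ℍ[ℝ]) = ((3 : ℝ) : ℍ[ℝ]) := by norm_cast
  rw [one_div, inv_mul_eq_iff_eq_mul₀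
    (by rw [h3', Ne, show ((0:ℍ[ℝ]) = ((0:ℝ):ℍ[ℝ])) from rfl, Quaternion.coe_inj]; norm_num :
      (3:ℍ[ℝ]) ≠ 0), hX, hT, h3']
  ext <;> simp [h0, h1, h2, h3] <;> ring

lemma jQ_sub (n : ℕ) : jQ (n + 2) - 4 * jQ n =
    ((jL3 (n + 2) - 4 * jL3 n : ℤ) : ℝ) +
      ((jL3 (n + 3) - 4 * jL3 (n + 1) : ℤ) : ℝ) * qi +
      ((jL3 (n + 4) - 4 * jL3 (n + 2) : ℤ) : ℝ) * qj +
      ((jL3 (n + 5) - 4 * jL3 (n + 3) : ℤ) : ℝ) * qk := by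
  have h4 : (4 : ℍ[ℝ]) = ((4 : ℝ) : ℍ[ℝ]) := by norm_cast
  simp only [jQ, h4, show n + 2 + 1 = n + 3 from rfl, show n + 2 + 2 = n + 4 from rfl,
    show n + 2 + 3 = n + 5 from rfl]
  ext <;> simp <;> push_cast <;> ring

theorem third_order_jacobsthal_lucas_quaternion_identity (n : ℕ) (hn : 2 ≤ n) :
    (n % 3 = 0 → (1 / 3 : ℍ[ℝ]) * (jQ n - 4 * jQ (n - 2)) = 2 - qi - qj + 2 * qk) ∧
    (n % 3 = 1 → (1 / 3 : ℍ[ℝ]) * (jQ n - 4 * jQ (n - 2)) = -1 - qi + 2 * qj - qk) ∧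
    (n % 3 = 2 → (1 / 3 : ℍ[ℝ]) * (jQ n - 4 * jQ (n - 2)) = -1 + 2 * qi - qj - qk) := by
  obtain ⟨m, rfl⟩ : ∃ m, n = m + 2 := ⟨n - 2, by omega⟩
  have hsub : m + 2 - 2 = m := rfl
  rw [hsub]
  refine ⟨fun h => ?_, fun h => ?_, fun h => ?_⟩ <;>
    [ (have k0 := jL3_key m; have k1 := jL3_key (m+1); have k2 := jL3_key (m+2);
       have k3 := jL3_key (m+3);
       simp only [show m % 3 = 1 from by omega, show (m+1) % 3 = 2 from by omega,
         show (m+2) % 3 = 0 from by omega, show (m+3) % 3 = 1 from by omega]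
         at k0 k1 k2 k3;
       norm_num at k0 k1 k2 k3;
       refine hq _ _ _ _ 2 (-1) (-1) 2 ?_ ?_ ?_ ?_ _ _ (jQ_sub m) ?_);
      (have k0 := jL3_key m; have k1 := jL3_key (m+1); have k2 := jL3_key (m+2);
       have k3 := jL3_key (m+3);
       simp only [show m % 3 = 2 from by omega, show (m+1) % 3 = 0 from by omega,
         show (m+2) % 3 = 1 from by omega, show (m+3) % 3 = 2 from by omega]
         at k0 k1 k2 k3;
       norm_num at k0 k1 k2 k3;
       refine hq _ _ _ _ (-1) (-1) 2 (-1) ?_ ?_ ?_ ?_ _ _ (jQ_sub m) ?_);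
      (have k0 := jL3_key m; have k1 := jL3_key (m+1); have k2 := jL3_key (m+2);
       have k3 := jL3_key (m+3);
       simp only [show m % 3 = 0 from by omega, show (m+1) % 3 = 1 from by omega,
         show (m+2) % 3 = 2 from by omega, show (m+3) % 3 = 0 from by omega]
         at k0 k1 k2 k3;
       norm_num at k0 k1 k2 k3;
       refine hq _ _ _ _ (-1) 2 (-1) (-1) ?_ ?_ ?_ ?_ _ _ (jQ_sub m) ?_)] <;>
  first
    | (rw [show m + 1 + 2 = m + 3 from rfl] at k1;
       rw [show m + 2 + 2 = m + 4 from rfl] at k2;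
       rw [show m + 3 + 2 = m + 5 from rfl] at k3;
       norm_cast; (try linarith [k0, k1, k2, k3]); done)
    | (ext <;>
        simp [show (2 : ℍ[ℝ]) = ((2 : ℝ) : ℍ[ℝ]) from by norm_cast] <;>
        norm_num)
end

section
/- Let N(q) denote the quaternion norm N(q) = q₀² + q₁² + q₂² + q₃² for q = q₀ + i·q₁ + j·q₂ + k·q₃. For every integer n ≥ 0: 49·N(JQ^{(3)}_n) equals 340·2^{2n} − 64·2^n + 18 if n ≡ 0 (mod 3), equals 340·2^{2n} + 68·2^n + 23 if n ≡ 1 (mod 3), and equals 340·2^{2n} − 4·2^n + 15 if n ≡ 2 (mod 3). -/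
open Quaternion

/-- The quaternion norm `N(q) = q₀² + q₁² + q₂² + q₃²`. -/
noncomputable def qnorm (q : ℍ[ℝ]) : ℝ :=
  q.re ^ 2 + q.imI ^ 2 + q.imJ ^ 2 + q.imK ^ 2

def cJ (n : ℕ) : ℤ := if n % 3 = 0 then -2 else if n % 3 = 1 then 3 else -1

lemma key : ∀ n : ℕ, 7 * J3 n = 2 ^ (n + 1) + cJ n
  | 0 => by norm_num [J3, cJ]
  | 1 => by norm_num [J3, cJ]
  | 2 => by norm_num [J3, cJ]
  | n + 3 => by
    have h0 := key n
    have h1 := key (n + 1)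
    have h2 := key (n + 2)
    show 7 * (J3 (n + 2) + J3 (n + 1) + 2 * J3 n) = _
    have hp : (2 : ℤ) ^ (n + 4) = 2 ^ (n + 3) + 2 ^ (n + 2) + 2 * 2 ^ (n + 1) := by ring
    have hm : n % 3 = 0 ∨ n % 3 = 1 ∨ n % 3 = 2 := by omega
    rcases hm with h | h | h <;>
      · simp only [cJ, h, show (n+1)%3 = (n%3+1)%3 by omega, show (n+2)%3 = (n%3+2)%3 by omega,
          show (n+3)%3 = n%3 by omega] at *
        norm_num at h0 h1 h2 hp ⊢ <;> linarith

lemma qnorm_JQ (n : ℕ) : qnorm (JQ n) =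
    ((J3 n ^ 2 + J3 (n + 1) ^ 2 + J3 (n + 2) ^ 2 + J3 (n + 3) ^ 2 : ℤ) : ℝ) := by
  have a1 : qi.re = 0 := rfl
  have a2 : qi.imI = 1 := rfl
  have a3 : qi.imJ = 0 := rfl
  have a4 : qi.imK = 0 := rfl
  have b1 : qj.re = 0 := rfl
  have b2 : qj.imI = 0 := rfl
  have b3 : qj.imJ = 1 := rfl
  have b4 : qj.imK = 0 := rfl
  have c1 : qk.re = 0 := rfl
  have c2 : qk.imI = 0 := rfl
  have c3 : qk.imJ = 0 := rfl
  have c4 : qk.imK = 1 := rfl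
  simp [qnorm, JQ, Quaternion.coe_mul_eq_smul, a1, a2, a3, a4, b1, b2, b3, b4, c1, c2, c3, c4]

lemma key_int (n : ℕ) :
    49 * (J3 n ^ 2 + J3 (n + 1) ^ 2 + J3 (n + 2) ^ 2 + J3 (n + 3) ^ 2) =
      340 * 2 ^ (2 * n) + 2 * (cJ n * 2 + cJ (n+1) * 4 + cJ (n+2) * 8 + cJ (n+3) * 16) * 2 ^ n
      + (cJ n ^ 2 + cJ (n+1) ^ 2 + cJ (n+2) ^ 2 + cJ (n+3) ^ 2) := by
  have h0 := key n
  have h1 := key (n + 1)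
  have h2 := key (n + 2)
  have h3 := key (n + 3)
  have hp : (2 : ℤ) ^ (2 * n) = 2 ^ n * 2 ^ n := by rw [two_mul, pow_add]
  have e0 : (2 : ℤ) ^ (n + 1) = 2 * 2 ^ n := by ring
  have e1 : (2 : ℤ) ^ (n + 2) = 4 * 2 ^ n := by ring
  have e2 : (2 : ℤ) ^ (n + 3) = 8 * 2 ^ n := by ring
  have e3 : (2 : ℤ) ^ (n + 4) = 16 * 2 ^ n := by ring
  rw [e0] at h0; rw [e1] at h1; rw [e2] at h2; rw [e3] at h3
  rw [hp]
  linear_combination (7 * J3 n + 2 * 2 ^ n + cJ n) * h0 +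
    (7 * J3 (n+1) + 4 * 2 ^ n + cJ (n+1)) * h1 +
    (7 * J3 (n+2) + 8 * 2 ^ n + cJ (n+2)) * h2 +
    (7 * J3 (n+3) + 16 * 2 ^ n + cJ (n+3)) * h3

theorem third_order_jacobsthal_quaternion_norm (n : ℕ) :
    (n % 3 = 0 → 49 * qnorm (JQ n) = 340 * 2 ^ (2 * n) - 64 * 2 ^ n + 18) ∧
    (n % 3 = 1 → 49 * qnorm (JQ n) = 340 * 2 ^ (2 * n) + 68 * 2 ^ n + 23) ∧
    (n % 3 = 2 → 49 * qnorm (JQ n) = 340 * 2 ^ (2 * n) - 4 * 2 ^ n + 15) := by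
  have hi := key_int n
  refine ⟨fun h => ?_, fun h => ?_, fun h => ?_⟩ <;>
    · rw [qnorm_JQ]
      simp only [cJ, h, show (n+1)%3 = (n%3+1)%3 by omega, show (n+2)%3 = (n%3+2)%3 by omega,
        show (n+3)%3 = n%3 by omega] at hi
      norm_num at hi
      have hi' := congrArg (fun z : ℤ => (z : ℝ)) hi
      push_cast at hi' ⊢
      linarith
end

section
/- For every integer n ≥ 0: jQ^{(3)}_n − 4·JQ^{(3)}_n equals 2 − 3i + j + 2k if n ≡ 0 (mod 3), equals −3 + i + 2j − 3k if n ≡ 1 (mod 3), and equals 1 + 2i − 3j + k if n ≡ 2 (mod 3). -/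
open Quaternion

lemma re2 : (2:ℍ[ℝ]).re = 2 := rfl
lemma imI2 : (2:ℍ[ℝ]).imI = 0 := rfl
lemma imJ2 : (2:ℍ[ℝ]).imJ = 0 := rfl
lemma imK2 : (2:ℍ[ℝ]).imK = 0 := rfl
lemma re3 : (3:ℍ[ℝ]).re = 3 := rfl
lemma imI3 : (3:ℍ[ℝ]).imI = 0 := rfl
lemma imJ3 : (3:ℍ[ℝ]).imJ = 0 := rfl
lemma imK3 : (3:ℍ[ℝ]).imK = 0 := rfl
lemma re4 : (4:ℍ[ℝ]).re = 4 := rfl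
lemma imI4 : (4:ℍ[ℝ]).imI = 0 := rfl
lemma imJ4 : (4:ℍ[ℝ]).imJ = 0 := rfl
lemma imK4 : (4:ℍ[ℝ]).imK = 0 := rfl

lemma a_sum : ∀ n : ℕ, (jL3 n - 4 * J3 n) + (jL3 (n+1) - 4 * J3 (n+1)) + (jL3 (n+2) - 4 * J3 (n+2)) = 0 := by
  intro n
  induction n with
  | zero => simp [J3, jL3]
  | succ m ih =>
    have h1 : jL3 (m+3) = jL3 (m+2) + jL3 (m+1) + 2 * jL3 m := rfl
    have h2 : J3 (m+3) = J3 (m+2) + J3 (m+1) + 2 * J3 m := rfl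
    simp only [show m+1+1 = m+2 from rfl, show m+1+2 = m+3 from rfl, h1, h2]
    linarith

lemma a_shift (n : ℕ) : jL3 (n+3) - 4 * J3 (n+3) = jL3 n - 4 * J3 n := by
  have h1 : jL3 (n+3) = jL3 (n+2) + jL3 (n+1) + 2 * jL3 n := rfl
  have h2 : J3 (n+3) = J3 (n+2) + J3 (n+1) + 2 * J3 n := rfl
  have := a_sum n
  rw [h1, h2]; linarith

lemma a_per : ∀ n : ℕ, jL3 n - 4 * J3 n = jL3 (n % 3) - 4 * J3 (n % 3) := by
  intro n
  induction n using Nat.strong_induction_on with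
  | _ n ih =>
    match n with
    | 0 => rfl
    | 1 => rfl
    | 2 => rfl
    | (m+3) =>
      rw [a_shift m, ih m (by omega), show (m+3)%3 = m%3 by omega]

lemma key_s10 (m : ℕ) : jQ m - 4 * JQ m =
    (((jL3 m - 4 * J3 m : ℤ) : ℝ) : ℍ[ℝ])
    + (((jL3 (m+1) - 4 * J3 (m+1) : ℤ) : ℝ) : ℍ[ℝ]) * qi
    + (((jL3 (m+2) - 4 * J3 (m+2) : ℤ) : ℝ) : ℍ[ℝ]) * qj
    + (((jL3 (m+3) - 4 * J3 (m+3) : ℤ) : ℝ) : ℍ[ℝ]) * qk := by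
  simp only [jQ, JQ]
  ext <;> simp only [Quaternion.re_mul, Quaternion.imI_mul, Quaternion.imJ_mul, Quaternion.imK_mul, Quaternion.re_sub, Quaternion.re_add, Quaternion.imI_sub, Quaternion.imI_add, Quaternion.imJ_sub, Quaternion.imJ_add, Quaternion.imK_sub, Quaternion.imK_add] <;> simp [qi, qj, qk, re2, imI2, imJ2, imK2, re3, imI3, imJ3, imK3, re4, imI4, imJ4, imK4] <;> push_cast <;> ring

theorem third_order_jacobsthal_lucas_minus_four_jacobsthal (n : ℕ) :
    (n % 3 = 0 → jQ n - 4 * JQ n = 2 - 3 * qi + qj + 2 * qk) ∧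
    (n % 3 = 1 → jQ n - 4 * JQ n = -3 + qi + 2 * qj - 3 * qk) ∧
    (n % 3 = 2 → jQ n - 4 * JQ n = 1 + 2 * qi - 3 * qj + qk) := by
  have h0 := a_per n
  have h1 := a_per (n+1)
  have h2 := a_per (n+2)
  have h3 := a_per (n+3)
  refine ⟨fun h => ?_, fun h => ?_, fun h => ?_⟩ <;>
  · rw [key_s10 n]
    rw [h0, h1, h2, h3]
    rw [show (n+1) % 3 = (n%3+1) % 3 by omega, show (n+2) % 3 = (n%3+2) % 3 by omega,
        show (n+3) % 3 = n % 3 by omega, h]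
    norm_num [J3, jL3]
    ext <;> simp only [Quaternion.re_mul, Quaternion.imI_mul, Quaternion.imJ_mul, Quaternion.imK_mul, Quaternion.re_sub, Quaternion.re_add, Quaternion.imI_sub, Quaternion.imI_add, Quaternion.imJ_sub, Quaternion.imJ_add, Quaternion.imK_sub, Quaternion.imK_add, Quaternion.re_neg, Quaternion.imI_neg, Quaternion.imJ_neg, Quaternion.imK_neg] <;> simp [qi, qj, qk, re2, imI2, imJ2, imK2, re3, imI3, imJ3, imK3, re4, imI4, imJ4, imK4] <;> norm_num
end

section
/- For every integer n ≥ 0: jQ^{(3)}_n − JQ^{(3)}_{n+2} equals 1 − i + k if n ≡ 0 (mod 3), equals −1 + j − k if n ≡ 1 (mod 3), and equals i − j if n ≡ 2 (mod 3). -/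
open Quaternion

def dd : ℕ → ℤ
  | 0 => 1
  | 1 => -1
  | _ => 0

lemma key_s12 : ∀ n, jL3 n - J3 (n + 2) = dd (n % 3) := by
  intro n
  induction n using Nat.strong_induction_on with
  | _ n ih =>
    match n with
    | 0 => decide
    | 1 => decide
    | 2 => decide
    | m + 3 =>
      have h0 := ih m (by omega)
      have h1 := ih (m + 1) (by omega)
      have h2 := ih (m + 2) (by omega)
      have eL : jL3 (m + 3) = jL3 (m + 2) + jL3 (m + 1) + 2 * jL3 m := by
        rw [jL3]
      have eJ : J3 (m + 3 + 2) = J3 (m + 4) + J3 (m + 3) + 2 * J3 (m + 2) := by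
        show J3 ((m + 2) + 3) = _
        rw [J3]
      have e : (m + 3) % 3 = m % 3 := by omega
      rw [eL, eJ, e]
      have e1 : (m + 1) % 3 = (m % 3 + 1) % 3 := by omega
      have e2 : (m + 2) % 3 = (m % 3 + 2) % 3 := by omega
      rw [e1] at h1
      rw [e2] at h2
      have hm : m % 3 = 0 ∨ m % 3 = 1 ∨ m % 3 = 2 := by omega
      have a4 : m + 4 = (m + 2) + 2 := by omega
      have a3 : m + 3 = (m + 1) + 2 := by omega
      rw [a4, a3]
      rcases hm with h | h | h <;> rw [h] at h0 h1 h2 ⊢ <;>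
        simp [dd] at h0 h1 h2 ⊢ <;> linarith

theorem third_order_jacobsthal_lucas_minus_shifted_jacobsthal (n : ℕ) :
    (n % 3 = 0 → jQ n - JQ (n + 2) = 1 - qi + qk) ∧
    (n % 3 = 1 → jQ n - JQ (n + 2) = -1 + qj - qk) ∧
    (n % 3 = 2 → jQ n - JQ (n + 2) = qi - qj) := by
  refine ⟨fun h => ?_, fun h => ?_, fun h => ?_⟩ <;>
  · have k0 := key_s12 n
    have k1 := key_s12 (n + 1)
    have k2 := key_s12 (n + 2)
    have k3 := key_s12 (n + 3)
    rw [h] at k0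
    rw [show (n + 1) % 3 = (n % 3 + 1) % 3 by omega, h] at k1
    rw [show (n + 2) % 3 = (n % 3 + 2) % 3 by omega, h] at k2
    rw [show (n + 3) % 3 = n % 3 by omega, h] at k3
    simp [dd] at k0 k1 k2 k3
    rw [show n + 1 + 2 = n + 3 from rfl] at k1
    rw [show n + 2 + 2 = n + 4 from rfl] at k2
    rw [show n + 3 + 2 = n + 5 from rfl] at k3
    have r0 : ((jL3 n : ℝ)) - (J3 (n + 2) : ℝ) = (jL3 n - J3 (n + 2) : ℤ) := by push_cast; ring
    have r1 : ((jL3 (n + 1) : ℝ)) - (J3 (n + 3) : ℝ) = (jL3 (n + 1) - J3 (n + 3) : ℤ) := by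
      push_cast; ring
    have r2 : ((jL3 (n + 2) : ℝ)) - (J3 (n + 4) : ℝ) = (jL3 (n + 2) - J3 (n + 4) : ℤ) := by
      push_cast; ring
    have r3 : ((jL3 (n + 3) : ℝ)) - (J3 (n + 5) : ℝ) = (jL3 (n + 3) - J3 (n + 5) : ℤ) := by
      push_cast; ring
    rw [k0] at r0; rw [k1] at r1; rw [k2] at r2; rw [k3] at r3
    ext <;>
      simp only [jQ, JQ, Quaternion.re_sub, Quaternion.imI_sub, Quaternion.imJ_sub,
        Quaternion.imK_sub, Quaternion.re_add, Quaternion.imI_add, Quaternion.imJ_add,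
        Quaternion.imK_add, Quaternion.re_mul, Quaternion.imI_mul, Quaternion.imJ_mul,
        Quaternion.imK_mul] <;>
      simp [jQ, JQ, qi, qj, qk, Quaternion.ext_iff, show n + 2 + 1 = n + 3 from rfl,
        show n + 2 + 2 = n + 4 from rfl, show n + 2 + 3 = n + 5 from rfl] <;>
      push_cast at r0 r1 r2 r3 ⊢ <;> linarith
end

section
/- For every integer n ≥ 0: Σ_{s=0}^{n} jQ^{(3)}_s equals jQ^{(3)}_{n+1} + (1 − 4i − 5j − 7k) if n ≡ 0 (mod 3), equals jQ^{(3)}_{n+1} − 2(1 + 2i + j + 5k) if n ≡ 1 (mod 3), and equals jQ^{(3)}_{n+1} − (2 + i + 5j + 10k) if n ≡ 2 (mod 3). -/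
open Quaternion

lemma sum_jL3 : ∀ n : ℕ, ∑ s ∈ Finset.range (n + 1), jL3 s
    = jL3 (n + 1) + (if n % 3 = 0 then 1 else -2)
  | 0 => by decide
  | 1 => by decide
  | 2 => by decide
  | n + 3 => by
    have ih := sum_jL3 n
    have h3 : (n + 3) % 3 = n % 3 := by omega
    rw [Finset.sum_range_succ, Finset.sum_range_succ, Finset.sum_range_succ, ih, h3]
    show _ = jL3 (n + 4) + _
    rw [show jL3 (n + 4) = jL3 (n + 3) + jL3 (n + 2) + 2 * jL3 n.succ from rfl]
    ring

lemma sum_shift (f : ℕ → ℤ) (n : ℕ) :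
    ∑ s ∈ Finset.range (n + 1), f (s + 1) = ∑ s ∈ Finset.range (n + 2), f s - f 0 := by
  rw [Finset.sum_range_succ' f (n + 1)]
  ring

lemma e1 (n : ℕ) : ∑ s ∈ Finset.range (n + 1), jL3 (s + 1)
    = jL3 (n + 2) + (if (n + 1) % 3 = 0 then 1 else -2) - 2 := by
  rw [sum_shift, sum_jL3 (n + 1)]; rfl

lemma e2 (n : ℕ) : ∑ s ∈ Finset.range (n + 1), jL3 (s + 2)
    = jL3 (n + 3) + (if (n + 2) % 3 = 0 then 1 else -2) - 3 := by
  have h := sum_shift (fun t => jL3 (t + 1)) n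
  rw [Finset.sum_congr rfl (fun s _ => by ring_nf : ∀ s ∈ Finset.range (n + 1),
    jL3 (s + 2) = jL3 (s + 1 + 1)), h, e1 (n + 1)]
  have e : (n + 1 + 2 : ℕ) = n + 3 := by omega
  have e' : (n + 1 + 1 : ℕ) = n + 2 := by omega
  rw [e, e']
  have h1 : jL3 (0 + 1) = 1 := rfl
  omega

lemma e3 (n : ℕ) : ∑ s ∈ Finset.range (n + 1), jL3 (s + 3)
    = jL3 (n + 4) + (if n % 3 = 0 then 1 else -2) - 8 := by
  have h := sum_shift (fun t => jL3 (t + 2)) n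
  rw [Finset.sum_congr rfl (fun s _ => by ring_nf : ∀ s ∈ Finset.range (n + 1),
    jL3 (s + 3) = jL3 (s + 1 + 2)), h, e2 (n + 1)]
  have h3 : (n + 1 + 2) % 3 = n % 3 := by omega
  have e : (n + 1 + 3 : ℕ) = n + 4 := by omega
  rw [h3, e]
  have h2 : jL3 (0 + 2) = 5 := rfl
  omega

lemma qre_ofNat (m : ℕ) [m.AtLeastTwo] :
    (no_index (OfNat.ofNat m) : ℍ[ℝ]).re = OfNat.ofNat m := rfl
lemma qimI_ofNat (m : ℕ) [m.AtLeastTwo] : (no_index (OfNat.ofNat m) : ℍ[ℝ]).imI = 0 := rfl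
lemma qimJ_ofNat (m : ℕ) [m.AtLeastTwo] : (no_index (OfNat.ofNat m) : ℍ[ℝ]).imJ = 0 := rfl
lemma qimK_ofNat (m : ℕ) [m.AtLeastTwo] : (no_index (OfNat.ofNat m) : ℍ[ℝ]).imK = 0 := rfl

lemma qcoe_ofNat (m : ℕ) [m.AtLeastTwo] :
    ((no_index (OfNat.ofNat m) : ℝ) : ℍ[ℝ]) = OfNat.ofNat m := rfl

lemma qcoe_sum (s : Finset ℕ) (f : ℕ → ℝ) :
    ((∑ i ∈ s, f i : ℝ) : ℍ[ℝ]) = ∑ i ∈ s, ((f i : ℝ) : ℍ[ℝ]) := by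
  induction s using Finset.cons_induction with
  | empty => simp
  | cons a s ha ih => rw [Finset.sum_cons, Finset.sum_cons, Quaternion.coe_add, ih]

theorem third_order_jacobsthal_lucas_quaternion_partial_sums (n : ℕ) :
    (n % 3 = 0 → ∑ s ∈ Finset.range (n + 1), jQ s =
      jQ (n + 1) + (1 - 4 * qi - 5 * qj - 7 * qk)) ∧
    (n % 3 = 1 → ∑ s ∈ Finset.range (n + 1), jQ s =
      jQ (n + 1) - 2 * (1 + 2 * qi + qj + 5 * qk)) ∧
    (n % 3 = 2 → ∑ s ∈ Finset.range (n + 1), jQ s =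
      jQ (n + 1) - (2 + qi + 5 * qj + 10 * qk)) := by
  have hsum : ∑ s ∈ Finset.range (n + 1), jQ s
      = ((∑ s ∈ Finset.range (n + 1), jL3 s : ℤ) : ℝ)
        + ((∑ s ∈ Finset.range (n + 1), jL3 (s + 1) : ℤ) : ℝ) * qi
        + ((∑ s ∈ Finset.range (n + 1), jL3 (s + 2) : ℤ) : ℝ) * qj
        + ((∑ s ∈ Finset.range (n + 1), jL3 (s + 3) : ℤ) : ℝ) * qk := by
    simp only [jQ, Finset.sum_add_distrib, ← Finset.sum_mul, Int.cast_sum, qcoe_sum]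
  rw [hsum, sum_jL3 n, e1 n, e2 n, e3 n]
  refine ⟨fun h => ?_, fun h => ?_, fun h => ?_⟩
  · have h1 : (n + 1) % 3 = 1 := by omega
    have h2 : (n + 2) % 3 = 2 := by omega
    rw [h, h1, h2]
    norm_num [jQ]
    push_cast [qcoe_ofNat]
    simp only [add_assoc, Nat.reduceAdd]
    noncomm_ring
  · have h1 : (n + 1) % 3 = 2 := by omega
    have h2 : (n + 2) % 3 = 0 := by omega
    rw [h, h1, h2]
    norm_num [jQ]
    push_cast [qcoe_ofNat]
    simp only [add_assoc, Nat.reduceAdd]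
    noncomm_ring
    norm_num
    abel
  · have h1 : (n + 1) % 3 = 0 := by omega
    have h2 : (n + 2) % 3 = 1 := by omega
    rw [h, h1, h2]
    norm_num [jQ]
    push_cast [qcoe_ofNat]
    simp only [add_assoc, Nat.reduceAdd]
    noncomm_ring
end

section
/- In the ring of formal power series over the real quaternions, (1 − t − t² − 2t³) · Σ_{n=0}^{∞} JQ^{(3)}_n t^n = (i + j + 2k) + (1 + j + 3k)·t + 2(j + k)·t²; equivalently, the generating function of the sequence {JQ^{(3)}_n} is [(i + j + 2k) + t(1 + j + 3k) + 2t²(j + k)] / (1 − t − t² − 2t³). -/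
open Quaternion

lemma JQ_rec (n : ℕ) : JQ (n + 3) = JQ (n + 2) + JQ (n + 1) + 2 * JQ n := by
  have h : ∀ m : ℕ, J3 (m + 3) = J3 (m + 2) + J3 (m + 1) + 2 * J3 m := fun m => rfl
  simp only [JQ, show n+3+1 = n+1+3 from rfl, show n+3+2 = n+2+3 from rfl,
    show n+2+1=n+3 from rfl, show n+2+2=n+1+3 from rfl,
    show n+1+1=n+2 from rfl, show n+1+2=n+3 from rfl, h]
  rw [two_mul]
  push_cast
  rw [show (2:ℍ[ℝ]) = ((2:ℝ):ℍ[ℝ]) from rfl]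
  ext <;> simp [qi_re, qi_imI, qi_imJ, qi_imK, qj_re, qj_imI, qj_imJ, qj_imK, qk_re, qk_imI, qk_imJ, qk_imK, Quaternion.re_mul, Quaternion.imI_mul, Quaternion.imJ_mul, Quaternion.imK_mul] <;> ring

open PowerSeries in
theorem third_order_jacobsthal_quaternion_generating_function :
    ((1 : ℍ[ℝ]⟦X⟧) - X - X ^ 2 - 2 * X ^ 3) * PowerSeries.mk JQ =
      C (R := ℍ[ℝ]) (qi + qj + 2 * qk) + C (R := ℍ[ℝ]) (1 + qj + 3 * qk) * X
        + C (R := ℍ[ℝ]) (2 * (qj + qk)) * X ^ 2 := by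
  refine PowerSeries.ext fun n => ?_
  match n with
  | 0 =>
      simp [sub_mul, add_mul, two_mul, coeff_X_pow_mul', coeff_mul_X_pow', coeff_mk, coeff_X,
        coeff_zero_eq_constantCoeff]
      ext <;> simp [JQ, qi_re, qi_imI, qi_imJ, qi_imK, qj_re, qj_imI, qj_imJ, qj_imK, qk_re, qk_imI, qk_imJ, qk_imK, Quaternion.re_mul, Quaternion.imI_mul, Quaternion.imJ_mul, Quaternion.imK_mul] <;> norm_num [J3]
  | 1 =>
      simp [sub_mul, add_mul, two_mul, coeff_X_pow_mul', coeff_mul_X_pow', coeff_mk, coeff_X]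
      rw [show (3:ℍ[ℝ]) = ((3:ℝ):ℍ[ℝ]) from rfl]
      ext <;> simp [JQ, qi_re, qi_imI, qi_imJ, qi_imK, qj_re, qj_imI, qj_imJ, qj_imK, qk_re, qk_imI, qk_imJ, qk_imK, Quaternion.re_mul, Quaternion.imI_mul, Quaternion.imJ_mul, Quaternion.imK_mul] <;> norm_num [J3]
  | 2 =>
      simp [sub_mul, add_mul, two_mul, coeff_X_pow_mul', coeff_mul_X_pow', coeff_mk, coeff_X]
      ext <;> simp [JQ, qi_re, qi_imI, qi_imJ, qi_imK, qj_re, qj_imI, qj_imJ, qj_imK, qk_re, qk_imI, qk_imJ, qk_imK, Quaternion.re_mul, Quaternion.imI_mul, Quaternion.imJ_mul, Quaternion.imK_mul] <;> norm_num [J3]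
  | (m + 3) =>
      simp [sub_mul, add_mul, two_mul, coeff_X_pow_mul', coeff_mul_X_pow', coeff_mk, coeff_X]
      rw [JQ_rec, two_mul]
      abel
end

section
/- For every integer n ≥ 1, JQ^{(3)}_{n+2} = JQ^{(3)}_2 · J^{(3)}_{n+1} + (JQ^{(3)}_1 + 2·JQ^{(3)}_0) · J^{(3)}_n + 2·JQ^{(3)}_1 · J^{(3)}_{n−1}. -/
open Quaternion

lemma J3_rec (n : ℕ) : J3 (n + 3) = J3 (n + 2) + J3 (n + 1) + 2 * J3 n := by
  rw [J3]

lemma J3_K0 (m : ℕ) : J3 (m + 3) = J3 (m + 2) + J3 (m + 1) + 2 * J3 m := J3_rec m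

lemma J3_K1 (m : ℕ) : J3 (m + 4) = 2 * J3 (m + 2) + 3 * J3 (m + 1) + 2 * J3 m := by
  have h1 := J3_rec (m + 1)
  have h0 := J3_rec m
  simp only [show m + 1 + 3 = m + 4 from rfl, show m + 1 + 2 = m + 3 from rfl,
    show m + 1 + 1 = m + 2 from rfl] at h1
  linarith

lemma J3_K2 (m : ℕ) : J3 (m + 5) = 5 * J3 (m + 2) + 4 * J3 (m + 1) + 4 * J3 m := by
  have h2 := J3_rec (m + 2)
  have h1 := J3_K1 m
  have h0 := J3_rec m
  simp only [show m + 2 + 3 = m + 5 from rfl, show m + 2 + 2 = m + 4 from rfl,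
    show m + 2 + 1 = m + 3 from rfl] at h2
  linarith

lemma J3_K3 (m : ℕ) : J3 (m + 6) = 9 * J3 (m + 2) + 9 * J3 (m + 1) + 10 * J3 m := by
  have h3 := J3_rec (m + 3)
  have h2 := J3_K2 m
  have h1 := J3_K1 m
  have h0 := J3_rec m
  simp only [show m + 3 + 3 = m + 6 from rfl, show m + 3 + 2 = m + 5 from rfl,
    show m + 3 + 1 = m + 4 from rfl] at h3
  linarith

theorem third_order_jacobsthal_quaternion_recurrence_in_terms_of_numbers
    (n : ℕ) (hn : 1 ≤ n) :
    JQ (n + 2) = (J3 (n + 1) : ℝ) • JQ 2 + (J3 n : ℝ) • (JQ 1 + 2 * JQ 0)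
      + (J3 (n - 1) : ℝ) • (2 * JQ 1) := by
  obtain ⟨m, rfl⟩ : ∃ m, n = m + 1 := ⟨n - 1, by omega⟩
  simp only [Nat.add_sub_cancel]
  have k0 : (J3 (m + 3) : ℝ) = (J3 (m+2) : ℝ) + (J3 (m+1) : ℝ) + 2 * (J3 m : ℝ) := by
    exact_mod_cast congrArg (Int.cast : ℤ → ℝ) (J3_K0 m)
  have k1 : (J3 (m + 4) : ℝ) = 2*(J3 (m+2) : ℝ) + 3*(J3 (m+1) : ℝ) + 2 * (J3 m : ℝ) := by
    exact_mod_cast congrArg (Int.cast : ℤ → ℝ) (J3_K1 m)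
  have k2 : (J3 (m + 5) : ℝ) = 5*(J3 (m+2) : ℝ) + 4*(J3 (m+1) : ℝ) + 4 * (J3 m : ℝ) := by
    exact_mod_cast congrArg (Int.cast : ℤ → ℝ) (J3_K2 m)
  have k3 : (J3 (m + 6) : ℝ) = 9*(J3 (m+2) : ℝ) + 9*(J3 (m+1) : ℝ) + 10 * (J3 m : ℝ) := by
    exact_mod_cast congrArg (Int.cast : ℤ → ℝ) (J3_K3 m)
  simp only [two_mul]
  have hqi : qi.re = 0 ∧ qi.imI = 1 ∧ qi.imJ = 0 ∧ qi.imK = 0 := ⟨rfl, rfl, rfl, rfl⟩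
  have hqj : qj.re = 0 ∧ qj.imI = 0 ∧ qj.imJ = 1 ∧ qj.imK = 0 := ⟨rfl, rfl, rfl, rfl⟩
  have hqk : qk.re = 0 ∧ qk.imI = 0 ∧ qk.imJ = 0 ∧ qk.imK = 1 := ⟨rfl, rfl, rfl, rfl⟩
  ext <;>
    simp [JQ, hqi, hqj, hqk, J3, show m+1+2 = m+3 from rfl, show m+1+3 = m+4 from rfl,
      show m+1+4 = m+5 from rfl, show m+1+5 = m+6 from rfl,
      show m+1+1 = m+2 from rfl] <;>
    linarith [k0, k1, k2, k3]
end
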